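/- Step identity (Kuiper corrugation for the Von Kármán system): Let v ∈ C²(ℝ^d, ℝ^k), w ∈ C²(ℝ^d, ℝ^d), a ∈ C²(ℝ^d, ℝ), λ > 0, η ∈ ℝ^d a unit vector, and n ∈ {1,…,k}. Write t_η = ⟨x, η⟩ and define ṽ = v + (Γ(λt_η)/λ) a e_n and w̃ = w − (Γ(λt_η)/λ) a ∇v^n + (Γ̄(λt_η)/λ) a² η + (Γ̿(λt_η)/λ²) a ∇a, where Γ(t) = 2 sin t, Γ̄(t) = −(1/2) sin 2t, Γ̿(t) = (1/2) cos 2t, Γ̃(t) = 1 − (1/2) cos 2t. Then the following identity holds on ℝ^d: ((1/2)(∇ṽ)ᵀ∇ṽ + sym∇w̃) − ((1/2)(∇v)ᵀ∇v + sym∇w) − a² η⊗η = −(Γ(λt_η)/λ) a ∇²v^n + (Γ̿(λt_η)/λ²) a ∇²a + (Γ̃(λt_η)/λ²) ∇a⊗∇a. -/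

import Mathlib

/-- Partial derivative ∂_i f(x) (for scalar functions on ℝ^d). -/
noncomputable def pd {d : ℕ} (f : (Fin d → ℝ) → ℝ) (x : Fin d → ℝ) (i : Fin d) : ℝ :=
  fderiv ℝ f x (Pi.single i 1)

/-- Second partial derivative ∂_i ∂_j f(x). -/
noncomputable def pd2 {d : ℕ} (f : (Fin d → ℝ) → ℝ) (x : Fin d → ℝ) (i j : Fin d) : ℝ :=
  fderiv ℝ (fun y => fderiv ℝ f y (Pi.single j 1)) x (Pi.single i 1)

section helpers
variable {d : ℕ} {f : (Fin d → ℝ) → ℝ} {x : Fin d → ℝ}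

lemma pd_eqd {f' : (Fin d → ℝ) →L[ℝ] ℝ} (h : HasFDerivAt f f' x) (s : Fin d) :
    pd f x s = f' (Pi.single s 1) := by rw [pd, h.fderiv]

lemma hasFDerivAt_pd (hf : ContDiff ℝ 2 f) (x : Fin d → ℝ) (t : Fin d) :
    HasFDerivAt (fun y => pd f y t)
      ((ContinuousLinearMap.apply ℝ ℝ (Pi.single t 1)).comp (fderiv ℝ (fderiv ℝ f) x)) x := by
  have h1 : ContDiff ℝ 1 (fderiv ℝ f) := hf.fderiv_right (by norm_num)
  have h2 : HasFDerivAt (fderiv ℝ f) (fderiv ℝ (fderiv ℝ f) x) x :=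
    ((h1.differentiable one_ne_zero) x).hasFDerivAt
  exact ((ContinuousLinearMap.apply ℝ ℝ (Pi.single t 1)).hasFDerivAt).comp x h2

lemma pd2_eq (hf : ContDiff ℝ 2 f) (s t : Fin d) :
    pd2 f x s t = fderiv ℝ (fderiv ℝ f) x (Pi.single s 1) (Pi.single t 1) := by
  have h := hasFDerivAt_pd hf x t
  have : pd2 f x s t = pd (fun y => pd f y t) x s := rfl
  rw [this, pd_eqd h s]
  simp

lemma pd2_symm (hf : ContDiff ℝ 2 f) (s t : Fin d) : pd2 f x s t = pd2 f x t s := by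
  rw [pd2_eq hf, pd2_eq hf]
  have h1 : ContDiff ℝ 1 (fderiv ℝ f) := hf.fderiv_right (by norm_num)
  exact second_derivative_symmetric
    (fun y => ((hf.differentiable (by norm_num)) y).hasFDerivAt)
    (((h1.differentiable one_ne_zero) x).hasFDerivAt) _ _

end helpers


noncomputable def Γ : ℝ → ℝ := fun t => 2 * Real.sin t
noncomputable def Γbar : ℝ → ℝ := fun t => -(1/2) * Real.sin (2*t)
noncomputable def Γdbar : ℝ → ℝ := fun t => (1/2) * Real.cos (2*t)
noncomputable def Γtbar : ℝ → ℝ := fun t => 1 - (1/2) * Real.cos (2*t)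

set_option maxHeartbeats 2000000 in
/-- Kuiper's corrugation step identity for the Von Kármán system: with
ṽ = v + (Γ(λt_η)/λ) a e_n and
w̃ = w − (Γ(λt_η)/λ) a ∇v^n + (Γ̄(λt_η)/λ) a² η + (Γ̿(λt_η)/λ²) a ∇a,
one has ((1/2)(∇ṽ)ᵀ∇ṽ + sym∇w̃) − ((1/2)(∇v)ᵀ∇v + sym∇w) − a² η⊗η
      = −(Γ(λt_η)/λ) a ∇²v^n + (Γ̿(λt_η)/λ²) a ∇²a + (Γ̃(λt_η)/λ²) ∇a⊗∇a. -/
theorem stmt6 (d k : ℕ)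
    (v : (Fin d → ℝ) → Fin k → ℝ) (w : (Fin d → ℝ) → Fin d → ℝ)
    (a : (Fin d → ℝ) → ℝ)
    (hv : ContDiff ℝ 2 v) (hw : ContDiff ℝ 2 w) (ha : ContDiff ℝ 2 a)
    (lam : ℝ) (hlam : 0 < lam)
    (η : Fin d → ℝ) (hη : ∑ i, η i ^ 2 = 1) (n : Fin k)
    (teta : (Fin d → ℝ) → ℝ) (hteta : teta = fun x => ∑ i, x i * η i)
    (vt : (Fin d → ℝ) → Fin k → ℝ)
    (hvt : vt = fun x m =>
      v x m + (Γ (lam * teta x) / lam) * a x * (if m = n then 1 else 0))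
    (wt : (Fin d → ℝ) → Fin d → ℝ)
    (hwt : wt = fun x i =>
      w x i - (Γ (lam * teta x) / lam) * a x * pd (fun y => v y n) x i
        + (Γbar (lam * teta x) / lam) * (a x)^2 * η i
        + (Γdbar (lam * teta x) / lam^2) * a x * pd a x i) :
    ∀ x : Fin d → ℝ, ∀ s t : Fin d,
      (((1/2) * ∑ m, pd (fun y => vt y m) x s * pd (fun y => vt y m) x t
          + (pd (fun y => wt y s) x t + pd (fun y => wt y t) x s) / 2)
        - ((1/2) * ∑ m, pd (fun y => v y m) x s * pd (fun y => v y m) x t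
          + (pd (fun y => w y s) x t + pd (fun y => w y t) x s) / 2)
        - (a x)^2 * η s * η t)
      = -(Γ (lam * teta x) / lam) * a x * pd2 (fun y => v y n) x s t
        + (Γdbar (lam * teta x) / lam^2) * a x * pd2 a x s t
        + (Γtbar (lam * teta x) / lam^2) * pd a x s * pd a x t := by
  subst hteta hvt hwt
  intro x s t
  set τ : ℝ := lam * ∑ i, x i * η i with hτ
  -- basic contdiff of components
  have hvm : ∀ m, ContDiff ℝ 2 (fun y => v y m) := fun m =>
    (ContinuousLinearMap.proj (R := ℝ) (φ := fun _ : Fin k => ℝ) m).contDiff.comp hv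
  have hwm : ∀ i, ContDiff ℝ 2 (fun y => w y i) := fun i =>
    (ContinuousLinearMap.proj (R := ℝ) (φ := fun _ : Fin d => ℝ) i).contDiff.comp hw
  -- derivative of the linear form
  set T : (Fin d → ℝ) →L[ℝ] ℝ :=
    ∑ i, η i • ContinuousLinearMap.proj (R := ℝ) (φ := fun _ : Fin d => ℝ) i with hT_def
  have hTeval : ∀ r, T (Pi.single r 1) = η r := by
    intro r
    simp [hT_def, ContinuousLinearMap.sum_apply, Pi.single_apply]
  have hT : HasFDerivAt (fun y : Fin d → ℝ => ∑ i, y i * η i) T x := by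
    have : (fun y : Fin d → ℝ => ∑ i, y i * η i) = T := by
      ext y
      simp [hT_def, ContinuousLinearMap.sum_apply, mul_comm]
    rw [this]
    exact T.hasFDerivAt
  have hlt : HasFDerivAt (fun y : Fin d → ℝ => lam * ∑ i, y i * η i) (lam • T) x :=
    hT.const_mul lam
  -- trig pieces
  have h2τ : HasDerivAt (fun u : ℝ => 2 * u) 2 τ := by
    simpa using (hasDerivAt_id τ).const_mul 2
  have hG : HasFDerivAt (fun y : Fin d → ℝ => Γ (lam * ∑ i, y i * η i))
      ((2 * Real.cos τ) • (lam • T)) x := by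
    have h : HasDerivAt Γ (2 * Real.cos τ) τ := (Real.hasDerivAt_sin τ).const_mul 2
    show HasFDerivAt (Γ ∘ fun y : Fin d → ℝ => lam * ∑ i, y i * η i) _ x
    exact h.comp_hasFDerivAt x hlt
  have hGbar : HasFDerivAt (fun y : Fin d → ℝ => Γbar (lam * ∑ i, y i * η i))
      ((-(1/2) * (Real.cos (2*τ) * 2)) • (lam • T)) x := by
    have h : HasDerivAt Γbar (-(1/2) * (Real.cos (2*τ) * 2)) τ :=
      ((Real.hasDerivAt_sin (2*τ)).comp τ h2τ).const_mul (-(1/2))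
    show HasFDerivAt (Γbar ∘ fun y : Fin d → ℝ => lam * ∑ i, y i * η i) _ x
    exact h.comp_hasFDerivAt x hlt
  have hGdbar : HasFDerivAt (fun y : Fin d → ℝ => Γdbar (lam * ∑ i, y i * η i))
      (((1/2) * (-Real.sin (2*τ) * 2)) • (lam • T)) x := by
    have h : HasDerivAt Γdbar ((1/2) * (-Real.sin (2*τ) * 2)) τ :=
      ((Real.hasDerivAt_cos (2*τ)).comp τ h2τ).const_mul (1/2)
    show HasFDerivAt (Γdbar ∘ fun y : Fin d → ℝ => lam * ∑ i, y i * η i) _ x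
    exact h.comp_hasFDerivAt x hlt
  have haD : HasFDerivAt a (fderiv ℝ a x) x := ((ha.differentiable (by norm_num)) x).hasFDerivAt
  have hvD : ∀ m, HasFDerivAt (fun y => v y m) (fderiv ℝ (fun y => v y m) x) x := fun m =>
    (((hvm m).differentiable (by norm_num)) x).hasFDerivAt
  have hwD : ∀ i, HasFDerivAt (fun y => w y i) (fderiv ℝ (fun y => w y i) x) x := fun i =>
    (((hwm i).differentiable (by norm_num)) x).hasFDerivAt
  -- normalize divisions and squares in the goal
  simp only [div_eq_mul_inv, pow_two] at *
  have hlne : lam ≠ 0 := ne_of_gt hlam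
  -- value of pd of vt components
  have key_vt : ∀ (m : Fin k) (r : Fin d),
      pd (fun y => v y m + Γ (lam * ∑ i, y i * η i) * lam⁻¹ * a y * (if m = n then 1 else 0)) x r
      = pd (fun y => v y m) x r + (if m = n then 1 else 0) *
          (2 * Real.cos τ * η r * a x + Γ τ * lam⁻¹ * pd a x r) := by
    intro m r
    rw [pd_eqd (f := fun y => v y m + Γ (lam * ∑ i, y i * η i) * lam⁻¹ * a y * (if m = n then 1 else 0)) ((hvD m).add (((hG.mul_const lam⁻¹).mul haD).mul_const
      (if m = n then (1:ℝ) else 0))) r]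
    by_cases hmn : m = n
    · simp only [hmn, if_pos]
      simp [hTeval, pd, smul_eq_mul]
      field_simp
      ring
    · simp [hmn, hTeval, pd, smul_eq_mul]
  -- value of pd of wt components
  have key_wt : ∀ (i r : Fin d),
      pd (fun y => w y i - Γ (lam * ∑ j, y j * η j) * lam⁻¹ * a y * pd (fun z => v z n) y i
        + Γbar (lam * ∑ j, y j * η j) * lam⁻¹ * (a y * a y) * η i
        + Γdbar (lam * ∑ j, y j * η j) * (lam * lam)⁻¹ * a y * pd a y i) x r
      = pd (fun y => w y i) x r
        - ((2 * Real.cos τ * η r * a x + Γ τ * lam⁻¹ * pd a x r) * pd (fun z => v z n) x i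
           + Γ τ * lam⁻¹ * a x * pd2 (fun z => v z n) x r i)
        + (-(Real.cos (2*τ)) * η r * (a x * a x)
           + Γbar τ * lam⁻¹ * 2 * a x * pd a x r) * η i
        + (-(Real.sin (2*τ)) * lam⁻¹ * η r * a x * pd a x i
           + Γdbar τ * (lam⁻¹ * lam⁻¹) * (pd a x r * pd a x i + a x * pd2 a x r i)) := by
    intro i r
    have hF := (((hwD i).sub (((hG.mul_const lam⁻¹).mul haD).mul
        (hasFDerivAt_pd (hvm n) x i))).add
      (((hGbar.mul_const lam⁻¹).mul (haD.mul haD)).mul_const (η i))).add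
      (((hGdbar.mul_const (lam*lam)⁻¹).mul haD).mul (hasFDerivAt_pd ha x i))
    rw [pd_eqd (f := fun y => w y i - Γ (lam * ∑ j, y j * η j) * lam⁻¹ * a y * pd (fun z => v z n) y i
        + Γbar (lam * ∑ j, y j * η j) * lam⁻¹ * (a y * a y) * η i
        + Γdbar (lam * ∑ j, y j * η j) * (lam * lam)⁻¹ * a y * pd a y i) hF r]
    simp [hTeval, pd, pd2_eq (hvm n), pd2_eq ha, smul_eq_mul]
    field_simp
    ring
  simp only [key_vt, key_wt]
  set Bs := 2 * Real.cos τ * η s * a x + Γ τ * lam⁻¹ * pd a x s with hBs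
  set Bt := 2 * Real.cos τ * η t * a x + Γ τ * lam⁻¹ * pd a x t with hBt
  have hsum : ∑ m, ((pd (fun y => v y m) x s + (if m = n then 1 else 0) * Bs)
        * (pd (fun y => v y m) x t + (if m = n then 1 else 0) * Bt))
      = (∑ m, pd (fun y => v y m) x s * pd (fun y => v y m) x t)
        + (pd (fun y => v y n) x s * Bt + Bs * pd (fun y => v y n) x t + Bs * Bt) := by
    have h1 : ∀ m ∈ Finset.univ, ((pd (fun y => v y m) x s + (if m = n then 1 else 0) * Bs)
          * (pd (fun y => v y m) x t + (if m = n then 1 else 0) * Bt))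
        = pd (fun y => v y m) x s * pd (fun y => v y m) x t
          + (if m = n then (pd (fun y => v y n) x s * Bt + Bs * pd (fun y => v y n) x t
              + Bs * Bt) else 0) := by
      intro m _
      by_cases hmn : m = n
      · subst hmn; simp; ring
      · simp [hmn]
    rw [Finset.sum_congr rfl h1, Finset.sum_add_distrib, Finset.sum_ite_eq']
    simp
  rw [hsum]
  rw [pd2_symm (hvm n) t s, pd2_symm ha t s, hBs, hBt]
  simp only [Γ, Γbar, Γdbar, Γtbar, Real.sin_two_mul, Real.cos_two_mul]
  linear_combination (2 * lam⁻¹ * lam⁻¹ * pd a x s * pd a x t) * Real.sin_sq_add_cos_sq τ
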